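/- Let Γ be a countable discrete group, μ an admissible, aperiodic probability measure on Γ, and ω a non-principal ultrafilter on ℕ (with the ratio-limit kernel H well defined, finite and positive). Then the ratio-limit radical R_μ = {g ∈ Γ : H(x,g) = H(x,e) for all x ∈ Γ} is a subgroup of Γ. -/
import Mathlib


open Filter Topology

/-- The `n`-fold convolution power of `μ` (`convPow μ 0` is the point mass at the identity). -/
noncomputable def convPow {Γ : Type*} [Group Γ] (μ : Γ → ℝ) : ℕ → Γ → ℝ
  | 0 => fun g => by classical exact if g = (1 : Γ) then (1 : ℝ) else 0
  | n + 1 => fun g => ∑' h : Γ, μ h * convPow μ n (h⁻¹ * g)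

/-- The `n`-step transition probabilities `P^n(x,y) = μ^{*n}(x⁻¹y)`. -/
noncomputable def stepProb {Γ : Type*} [Group Γ] (μ : Γ → ℝ) (n : ℕ) (x y : Γ) : ℝ :=
  convPow μ n (x⁻¹ * y)

/-- `μ` is a probability measure on `Γ`: nonnegative with total mass one. -/
def IsProbMeasure {Γ : Type*} [Group Γ] (μ : Γ → ℝ) : Prop :=
  (∀ g, 0 ≤ μ g) ∧ HasSum μ 1

/-- `μ` is admissible: its support generates `Γ` as a semigroup. -/
def Admissible {Γ : Type*} [Group Γ] (μ : Γ → ℝ) : Prop :=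
  Subsemigroup.closure {g : Γ | 0 < μ g} = ⊤

/-- `μ` is aperiodic: `μ^{*n}(e) > 0` for all sufficiently large `n`. -/
def RWAperiodic {Γ : Type*} [Group Γ] (μ : Γ → ℝ) : Prop :=
  ∃ n₀ : ℕ, ∀ n ≥ n₀, 0 < convPow μ n 1

/-- `μ` is symmetric: `μ(g) = μ(g⁻¹)`. -/
def RWSymmetric {Γ : Type*} [Group Γ] (μ : Γ → ℝ) : Prop :=
  ∀ g : Γ, μ g⁻¹ = μ g

/-- The ratio-limit radical `R_μ = {g : H(·,g) = H(·,e)}` is a subgroup of `Γ`. -/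
theorem ratioLimitRadical_isSubgroup
    {Γ : Type*} [Group Γ] [Countable Γ] (μ : Γ → ℝ)
    (hprob : IsProbMeasure μ) (hadm : Admissible μ) (hap : RWAperiodic μ)
    (ω : Ultrafilter ℕ) (hω : (ω : Filter ℕ) ≤ Filter.atTop)
    (H : Γ → Γ → ℝ)
    -- the ratios `P^m(x,y)/P^m(e,y)` are eventually well defined and bounded above and
    -- below by positive constants depending only on `x`
    (hbdd : ∀ x : Γ, ∃ c C : ℝ, 0 < c ∧ ∀ y : Γ, ∀ᶠ m in (ω : Filter ℕ),
      0 < stepProb μ m 1 y ∧ c ≤ stepProb μ m x y / stepProb μ m 1 y ∧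
        stepProb μ m x y / stepProb μ m 1 y ≤ C)
    -- the ratio-limit kernel `H` is well defined along `ω`, finite and positive
    (hH : ∀ x y : Γ, Filter.Tendsto (fun m : ℕ => stepProb μ m x y / stepProb μ m 1 y)
      (ω : Filter ℕ) (nhds (H x y)))
    (hHpos : ∀ x y : Γ, 0 < H x y)
    :
    ∃ S : Subgroup Γ, (S : Set Γ) = {g : Γ | ∀ x : Γ, H x g = H x 1} := by
  classical
  set f : Γ → ℝ := fun a => H a⁻¹ 1 with hf
  have hfpos : ∀ a, 0 < f a := fun a => hHpos a⁻¹ 1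
  -- the key cocycle identity : H x y * f y = f (x⁻¹ * y)
  have key : ∀ x y : Γ, H x y * f y = f (x⁻¹ * y) := by
    intro x y
    obtain ⟨c, C, hc, hb⟩ := hbdd 1
    have hy : ∀ᶠ m in (ω : Filter ℕ), 0 < convPow μ m y := by
      filter_upwards [hb y] with m hm
      simpa [stepProb] using hm.1
    have h1 : ∀ᶠ m in (ω : Filter ℕ), 0 < convPow μ m 1 := by
      filter_upwards [hb 1] with m hm
      simpa [stepProb] using hm.1
    have hAB : Filter.Tendsto (fun m => (stepProb μ m x y / stepProb μ m 1 y) *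
        (stepProb μ m y⁻¹ 1 / stepProb μ m 1 1)) (ω : Filter ℕ) (nhds (H x y * f y)) :=
      (hH x y).mul (hH y⁻¹ 1)
    have heq : (fun m => (stepProb μ m x y / stepProb μ m 1 y) *
        (stepProb μ m y⁻¹ 1 / stepProb μ m 1 1)) =ᶠ[(ω : Filter ℕ)]
        (fun m => stepProb μ m (y⁻¹ * x) 1 / stepProb μ m 1 1) := by
      filter_upwards [hy, h1] with m hmy hm1
      simp only [stepProb, inv_one, one_mul, inv_inv, mul_one, mul_inv_rev]
      field_simp
    have h2 : Filter.Tendsto (fun m => stepProb μ m (y⁻¹ * x) 1 / stepProb μ m 1 1)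
        (ω : Filter ℕ) (nhds (H x y * f y)) := Filter.Tendsto.congr' heq hAB
    have h3 := hH (y⁻¹ * x) 1
    have h4 := tendsto_nhds_unique h2 h3
    rw [h4, hf]
    simp [mul_inv_rev]
  have hf1 : f 1 = 1 := by
    have h := key 1 1
    simp only [inv_one, one_mul] at h
    have : H 1 1 = 1 :=
      mul_right_cancel₀ (hfpos 1).ne' (h.trans (one_mul (f 1)).symm)
    simpa [hf] using this
  have hx1 : ∀ x : Γ, H x 1 = f x⁻¹ := by
    intro x
    have h := key x 1
    rw [hf1, mul_one, mul_one] at h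
    exact h
  -- the multiplicative characterization of membership
  have hmem : ∀ g : Γ, (∀ x : Γ, H x g = H x 1) ↔ (∀ a : Γ, f (a * g) = f a * f g) := by
    intro g
    constructor
    · intro h a
      have hk := key a⁻¹ g
      rw [inv_inv] at hk
      rw [← hk, h a⁻¹, hx1 a⁻¹, inv_inv]
    · intro h x
      have hk := key x g
      rw [h x⁻¹] at hk
      have hne : f g ≠ 0 := (hfpos g).ne'
      have : H x g = f x⁻¹ := mul_right_cancel₀ hne hk
      rw [this, hx1 x]
  refine ⟨⟨⟨⟨{g : Γ | ∀ x : Γ, H x g = H x 1}, ?_⟩, ?_⟩, ?_⟩, rfl⟩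
  · intro a b ha hb
    have ha' := (hmem a).1 ha
    have hb' := (hmem b).1 hb
    refine (hmem (a * b)).2 (fun c => ?_)
    calc f (c * (a * b)) = f ((c * a) * b) := by rw [mul_assoc]
      _ = f (c * a) * f b := hb' (c * a)
      _ = (f c * f a) * f b := by rw [ha' c]
      _ = f c * (f a * f b) := by ring
      _ = f c * f (a * b) := by rw [← hb' a]
  · exact fun x => rfl
  · intro a ha
    have ha' := (hmem a).1 ha
    refine (hmem a⁻¹).2 (fun c => ?_)
    have hfa : f a ≠ 0 := (hfpos a).ne'
    have h1 : f (c * a⁻¹) * f a = f c := by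
      have := ha' (c * a⁻¹)
      rw [mul_assoc, inv_mul_cancel, mul_one] at this
      exact this.symm
    have h2 : f a⁻¹ * f a = 1 := by
      have := ha' a⁻¹
      rw [inv_mul_cancel, hf1] at this
      exact this.symm
    apply mul_right_cancel₀ hfa
    rw [h1, mul_assoc, h2, mul_one]
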